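/- Let κ > 1, ξ > 0, a₀ > 0, and a₁ ∈ ℝ. Then there exists a twice continuously differentiable function a : [0,∞) → ℝ with a(t) > 0 for all t ≥ 0, a''(t) = ξ / a(t)^κ for all t ≥ 0, a(0) = a₀, a'(0) = a₁, and a(t) → +∞ as t → +∞. Moreover, every twice continuously differentiable function a : [0,∞) → ℝ that is positive and satisfies this initial-value problem tends to +∞ as t → +∞. -/

import Mathlib

open Real Set Filter Topology MeasureTheory intervalIntegral


lemma emden_blowup_aux (κ ξ a₀ a₁ : ℝ) (hκ : 1 < κ) (hξ : 0 < ξ) (ha₀ : 0 < a₀)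
    (a a' a'' : ℝ → ℝ)
    (hd1 : ∀ t ∈ Set.Ici (0:ℝ), HasDerivAt a (a' t) t)
    (hd2 : ∀ t ∈ Set.Ici (0:ℝ), HasDerivAt a' (a'' t) t)
    (hpos : ∀ t ∈ Set.Ici (0:ℝ), 0 < a t)
    (heq : ∀ t ∈ Set.Ici (0:ℝ), a'' t = ξ / a t ^ κ)
    (h0 : a 0 = a₀) (h1 : a' 0 = a₁) :
    Tendsto a atTop atTop := by
  have hκ0 : (0:ℝ) ≤ κ := by linarith
  have ha''pos : ∀ t ∈ Set.Ici (0:ℝ), 0 < a'' t := by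
    intro t ht
    rw [heq t ht]
    exact div_pos hξ (Real.rpow_pos_of_pos (hpos t ht) κ)
  have hconta' : ContinuousOn a' (Set.Ici 0) := fun x hx =>
    ((hd2 x hx).continuousAt).continuousWithinAt
  have hconta : ContinuousOn a (Set.Ici 0) := fun x hx =>
    ((hd1 x hx).continuousAt).continuousWithinAt
  have ha'mono : MonotoneOn a' (Set.Ici 0) := by
    apply monotoneOn_of_hasDerivWithinAt_nonneg (convex_Ici 0) hconta'
      (f' := a'')
    · intro x hx
      rw [interior_Ici] at hx
      exact (hd2 x (mem_Ici.mpr (le_of_lt hx))).hasDerivWithinAt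
    · intro x hx
      rw [interior_Ici] at hx
      exact (ha''pos x (mem_Ici.mpr (le_of_lt hx))).le
  -- there is a time with positive velocity
  have hexists : ∃ t₀, 0 ≤ t₀ ∧ 0 < a' t₀ := by
    by_contra h
    push_neg at h
    have hanti : AntitoneOn a (Set.Ici 0) := by
      apply antitoneOn_of_hasDerivWithinAt_nonpos (convex_Ici 0) hconta (f' := a')
      · intro x hx
        rw [interior_Ici] at hx
        exact (hd1 x (mem_Ici.mpr (le_of_lt hx))).hasDerivWithinAt
      · intro x hx
        rw [interior_Ici] at hx
        exact h x (le_of_lt hx)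
    have hle : ∀ t ∈ Set.Ici (0:ℝ), a t ≤ a₀ := by
      intro t ht
      have := hanti (le_refl (0:ℝ)) ht ht
      rwa [h0] at this
    set δ := ξ / a₀ ^ κ with hδdef
    have hδ : 0 < δ := div_pos hξ (Real.rpow_pos_of_pos ha₀ κ)
    have hlow : ∀ t ∈ Set.Ici (0:ℝ), δ ≤ a'' t := by
      intro t ht
      rw [heq t ht]
      have hcmp : a t ^ κ ≤ a₀ ^ κ :=
        Real.rpow_le_rpow (hpos t ht).le (hle t ht) hκ0
      exact div_le_div_of_nonneg_left hξ.le (Real.rpow_pos_of_pos (hpos t ht) κ) hcmp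
    have hmono2 : MonotoneOn (fun t => a' t - δ * t) (Set.Ici 0) := by
      apply monotoneOn_of_hasDerivWithinAt_nonneg (convex_Ici 0)
        (f' := fun t => a'' t - δ)
      · exact hconta'.sub (continuousOn_const.mul continuousOn_id)
      · intro x hx
        rw [interior_Ici] at hx
        have : HasDerivAt (fun t => a' t - δ * t) (a'' x - δ * 1) x :=
          (hd2 x (mem_Ici.mpr (le_of_lt hx))).sub ((hasDerivAt_id x).const_mul δ)
        simpa using this.hasDerivWithinAt
      · intro x hx
        rw [interior_Ici] at hx
        have := hlow x (mem_Ici.mpr (le_of_lt hx))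
        linarith
    set T := (|a₁| + 1) / δ with hT
    have hT0 : 0 ≤ T := div_nonneg (by positivity) hδ.le
    have := hmono2 (le_refl (0:ℝ)) hT0 hT0
    simp only [mul_zero, sub_zero, h1] at this
    have hcancel : δ * T = |a₁| + 1 := by
      rw [hT]; field_simp
    have h3 : 0 < a' T := by
      have h4 : a₁ ≤ a' T - δ * T := this
      have := abs_nonneg a₁
      have := neg_abs_le a₁
      nlinarith
    exact absurd h3 (not_lt.mpr (h T hT0))
  obtain ⟨t₀, ht₀, hd⟩ := hexists
  set d := a' t₀ with hddef
  have hge : ∀ t, t₀ ≤ t → d ≤ a' t := fun t ht =>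
    ha'mono ht₀ (ht₀.trans ht) ht
  have hmono3 : MonotoneOn (fun t => a t - d * t) (Set.Ici t₀) := by
    apply monotoneOn_of_hasDerivWithinAt_nonneg (convex_Ici t₀)
      (f' := fun t => a' t - d)
    · exact (hconta.mono (Set.Ici_subset_Ici.mpr ht₀)).sub
        (continuousOn_const.mul continuousOn_id)
    · intro x hx
      rw [interior_Ici] at hx
      have hx0 : (0:ℝ) ≤ x := ht₀.trans hx.le
      have : HasDerivAt (fun t => a t - d * t) (a' x - d * 1) x :=
        (hd1 x hx0).sub ((hasDerivAt_id x).const_mul d)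
      simpa using this.hasDerivWithinAt
    · intro x hx
      rw [interior_Ici] at hx
      have := hge x hx.le
      linarith
  have hgrow : ∀ t, t₀ ≤ t → (a t₀ - d * t₀) + d * t ≤ a t := by
    intro t ht
    have := hmono3 (le_refl t₀) ht ht
    simp only at this
    linarith
  apply tendsto_atTop_mono' atTop
    (by filter_upwards [eventually_ge_atTop t₀] with t ht using hgrow t ht)
  exact tendsto_atTop_add_const_left _ _ (Tendsto.const_mul_atTop hd tendsto_id)


set_option maxHeartbeats 2000000 in
lemma emden_exists_aux (κ ξ a₀ a₁ : ℝ) (hκ : 1 < κ) (hξ : 0 < ξ) (ha₀ : 0 < a₀) :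
    ∃ a a' a'' : ℝ → ℝ,
      (∀ t, HasDerivAt a (a' t) t) ∧
      (∀ t, HasDerivAt a' (a'' t) t) ∧
      (∀ t, 0 < a t) ∧
      (∀ t, a'' t = ξ / a t ^ κ) ∧
      a 0 = a₀ ∧ a' 0 = a₁ := by
  have hκ1 : (0:ℝ) < κ - 1 := by linarith
  obtain ⟨c, hcdef⟩ : ∃ c : ℝ, c = ξ / (κ - 1) := ⟨_, rfl⟩
  have hc : 0 < c := hcdef ▸ div_pos hξ hκ1
  obtain ⟨β, hβdef⟩ : ∃ β : ℝ, β = (κ - 1)⁻¹ := ⟨_, rfl⟩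
  have hβ : 0 < β := hβdef ▸ inv_pos.mpr hκ1
  have hβκ : β * κ = β + 1 := by rw [hβdef]; field_simp; ring
  obtain ⟨E, hEdef⟩ : ∃ E : ℝ, E = a₁ ^ 2 / 2 + c * a₀ ^ (1 - κ) := ⟨_, rfl⟩
  have hca : 0 < c * a₀ ^ (1 - κ) := mul_pos hc (Real.rpow_pos_of_pos ha₀ _)
  have hE : 0 < E := by rw [hEdef]; positivity
  have ha₁E : a₁ ^ 2 < 2 * E := by rw [hEdef]; nlinarith
  obtain ⟨s, hsdef⟩ : ∃ s : ℝ, s = Real.sqrt (2 * E) := ⟨_, rfl⟩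
  have hs : 0 < s := hsdef ▸ Real.sqrt_pos.mpr (by linarith)
  have hs2 : s ^ 2 = 2 * E := hsdef ▸ Real.sq_sqrt (by linarith)
  obtain ⟨I, hIdef⟩ : ∃ I : Set ℝ, I = Set.Ioo (-s) s := ⟨_, rfl⟩
  have hIopen : IsOpen I := hIdef ▸ isOpen_Ioo
  have ha₁I : a₁ ∈ I := by
    rw [hIdef]
    constructor
    · nlinarith [sq_nonneg (a₁ + s)]
    · nlinarith [sq_nonneg (a₁ - s)]
  have hu : ∀ v ∈ I, 0 < E - v ^ 2 / 2 := by
    intro v hv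
    rw [hIdef] at hv
    have h1 : v ^ 2 < s ^ 2 := sq_lt_sq' hv.1 hv.2
    rw [hs2] at h1
    linarith
  obtain ⟨u, hudef⟩ : ∃ u : ℝ → ℝ, u = fun v => E - v ^ 2 / 2 := ⟨_, rfl⟩
  obtain ⟨φ, hφdef⟩ : ∃ φ : ℝ → ℝ, φ = fun v => c ^ β * u v ^ (-β) := ⟨_, rfl⟩
  obtain ⟨g, hgdef⟩ : ∃ g : ℝ → ℝ, g = fun v => c ^ (β + 1) * u v ^ (-(β + 1)) / ξ := ⟨_, rfl⟩
  have hucont : Continuous u := by rw [hudef]; fun_prop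
  have hderivu : ∀ v : ℝ, HasDerivAt u (-v) v := by
    intro v
    rw [hudef]
    have h : HasDerivAt (fun x : ℝ => E - x ^ 2 / 2) (0 - 2 * v ^ 1 / 2) v :=
      (hasDerivAt_const v E).sub ((hasDerivAt_pow 2 v).div_const 2)
    convert h using 1
    ring
  have hupos : ∀ v ∈ I, 0 < u v := by
    intro v hv; rw [hudef]; exact hu v hv
  have hgpos : ∀ v ∈ I, 0 < g v := by
    intro v hv
    rw [hgdef]
    exact div_pos (mul_pos (Real.rpow_pos_of_pos hc _) (Real.rpow_pos_of_pos (hupos v hv) _)) hξ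
  have hgcontAt : ∀ v ∈ I, ContinuousAt g v := by
    intro v hv
    rw [hgdef]
    exact ((continuousAt_const).mul
      ((hucont.continuousAt).rpow_const (Or.inl (hupos v hv).ne'))).div_const ξ
  have hgcont : ContinuousOn g I := fun v hv => (hgcontAt v hv).continuousWithinAt
  have hmemIcc : ∀ {x y : ℝ}, x ∈ I → y ∈ I → Set.uIcc x y ⊆ I := by
    intro x y hx hy
    rw [hIdef] at hx hy ⊢
    exact Set.ordConnected_Ioo.uIcc_subset hx hy
  have hint : ∀ {x y : ℝ}, x ∈ I → y ∈ I → IntervalIntegrable g volume x y := by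
    intro x y hx hy
    exact (hgcont.mono (hmemIcc hx hy)).intervalIntegrable
  obtain ⟨T, hTdef⟩ : ∃ T : ℝ → ℝ, T = fun v => ∫ x in a₁..v, g x := ⟨_, rfl⟩
  have hT_deriv : ∀ v ∈ I, HasDerivAt T (g v) v := by
    intro v hv
    rw [hTdef]
    exact intervalIntegral.integral_hasDerivAt_right (hint ha₁I hv)
      (ContinuousOn.stronglyMeasurableAtFilter hIopen hgcont v hv) (hgcontAt v hv)
  have hTadd : ∀ {x y : ℝ}, x ∈ I → y ∈ I → T y - T x = ∫ t in x..y, g t := by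
    intro x y hx hy
    have := intervalIntegral.integral_add_adjacent_intervals (hint ha₁I hx) (hint hx hy)
    rw [hTdef]
    simp only
    rw [← this]
    ring
  have hTmono : StrictMonoOn T I := by
    intro x hx y hy hxy
    have h1 : T y - T x = ∫ t in x..y, g t := hTadd hx hy
    have h2 : 0 < ∫ t in x..y, g t := by
      apply intervalIntegral.intervalIntegral_pos_of_pos_on (hint hx hy)
      · intro t ht
        rw [hIdef] at hx hy
        refine hgpos t ?_
        rw [hIdef]
        exact ⟨lt_trans hx.1 ht.1, lt_trans ht.2 hy.2⟩
      · exact hxy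
    linarith
  have hIcoI : ∀ {x : ℝ}, 0 ≤ x → x < s → x ∈ I := by
    intro x h0 h1; rw [hIdef]; exact ⟨by linarith, h1⟩
  have hIocI : ∀ {x : ℝ}, -s < x → x ≤ 0 → x ∈ I := by
    intro x h0 h1; rw [hIdef]; exact ⟨h0, by linarith⟩
  obtain ⟨K, hKdef⟩ : ∃ K : ℝ, K = c ^ (β + 1) * s ^ (-(β + 1)) / ξ := ⟨_, rfl⟩
  have hK : 0 < K := hKdef ▸
    div_pos (mul_pos (Real.rpow_pos_of_pos hc _) (Real.rpow_pos_of_pos hs _)) hξ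
  have hβ1 : (0:ℝ) < β + 1 := by linarith
  -- pointwise lower bound near +s
  have hbound : ∀ x, 0 ≤ x → s - 1 ≤ x → x ∈ I → K * (s - x)⁻¹ ≤ g x := by
    intro x hx0 hx1 hxI
    have hxI' := hIdef ▸ hxI
    have hsx : 0 < s - x := by have := hxI'.2; linarith
    have hux : u x ≤ s * (s - x) := by
      rw [hudef]; simp only
      nlinarith [sq_nonneg (s - x), hs2]
    have h2 : (s * (s - x)) ^ (-(β + 1)) ≤ u x ^ (-(β + 1)) :=
      Real.rpow_le_rpow_of_nonpos (hupos x hxI) hux (by linarith)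
    have h4 : (s - x) ^ (-1 : ℝ) ≤ (s - x) ^ (-(β + 1)) :=
      Real.rpow_le_rpow_of_exponent_ge hsx (by linarith) (by linarith)
    rw [Real.rpow_neg_one] at h4
    have hs1 : (0:ℝ) < s ^ (-(β + 1)) := Real.rpow_pos_of_pos hs _
    have h5 : s ^ (-(β + 1)) * (s - x)⁻¹ ≤ u x ^ (-(β + 1)) :=
      calc s ^ (-(β + 1)) * (s - x)⁻¹ ≤ s ^ (-(β + 1)) * (s - x) ^ (-(β + 1)) :=
            mul_le_mul_of_nonneg_left h4 hs1.le
        _ = (s * (s - x)) ^ (-(β + 1)) := (Real.mul_rpow hs.le hsx.le).symm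
        _ ≤ u x ^ (-(β + 1)) := h2
    rw [hgdef, hKdef]; simp only
    calc c ^ (β + 1) * s ^ (-(β + 1)) / ξ * (s - x)⁻¹
        = c ^ (β + 1) * (s ^ (-(β + 1)) * (s - x)⁻¹) / ξ := by ring
      _ ≤ c ^ (β + 1) * u x ^ (-(β + 1)) / ξ := by
          gcongr
  -- pointwise lower bound near -s
  have hbound2 : ∀ x, x ≤ 0 → x ≤ 1 - s → x ∈ I → K * (s + x)⁻¹ ≤ g x := by
    intro x hx0 hx1 hxI
    have hxI' := hIdef ▸ hxI
    have hsx : 0 < s + x := by have := hxI'.1; linarith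
    have hux : u x ≤ s * (s + x) := by
      rw [hudef]; simp only
      nlinarith [sq_nonneg (s + x), hs2]
    have h2 : (s * (s + x)) ^ (-(β + 1)) ≤ u x ^ (-(β + 1)) :=
      Real.rpow_le_rpow_of_nonpos (hupos x hxI) hux (by linarith)
    have h4 : (s + x) ^ (-1 : ℝ) ≤ (s + x) ^ (-(β + 1)) :=
      Real.rpow_le_rpow_of_exponent_ge hsx (by linarith) (by linarith)
    rw [Real.rpow_neg_one] at h4
    have hs1 : (0:ℝ) < s ^ (-(β + 1)) := Real.rpow_pos_of_pos hs _
    have h5 : s ^ (-(β + 1)) * (s + x)⁻¹ ≤ u x ^ (-(β + 1)) :=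
      calc s ^ (-(β + 1)) * (s + x)⁻¹ ≤ s ^ (-(β + 1)) * (s + x) ^ (-(β + 1)) :=
            mul_le_mul_of_nonneg_left h4 hs1.le
        _ = (s * (s + x)) ^ (-(β + 1)) := (Real.mul_rpow hs.le hsx.le).symm
        _ ≤ u x ^ (-(β + 1)) := h2
    rw [hgdef, hKdef]; simp only
    calc c ^ (β + 1) * s ^ (-(β + 1)) / ξ * (s + x)⁻¹
        = c ^ (β + 1) * (s ^ (-(β + 1)) * (s + x)⁻¹) / ξ := by ring
      _ ≤ c ^ (β + 1) * u x ^ (-(β + 1)) / ξ := by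
          gcongr
  -- comparison functions
  have hL_deriv : ∀ x, x < s → HasDerivAt (fun y => -K * Real.log (s - y)) (K * (s - x)⁻¹) x := by
    intro x hx
    have h1 : HasDerivAt (fun y : ℝ => s - y) (-1) x := by
      simpa using (hasDerivAt_id x).const_sub s
    have h2 : HasDerivAt (fun y => Real.log (s - y)) (-1 / (s - x)) x :=
      h1.log (by intro h; linarith)
    have h3 := h2.const_mul (-K)
    convert h3 using 1
    all_goals first | rfl | ring
  have hL2_deriv : ∀ x, -s < x → HasDerivAt (fun y => K * Real.log (s + y)) (K * (s + x)⁻¹) x := by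
    intro x hx
    have h1 : HasDerivAt (fun y : ℝ => s + y) 1 x := by
      simpa using (hasDerivAt_id x).const_add s
    have h2 : HasDerivAt (fun y => Real.log (s + y)) (1 / (s + x)) x :=
      h1.log (by intro h; linarith)
    have h3 := h2.const_mul K
    convert h3 using 1
    all_goals first | rfl | ring
  -- T is unbounded above
  have hplus : ∀ M : ℝ, ∃ v ∈ I, M < T v := by
    intro M
    obtain ⟨v₀, hv₀def⟩ : ∃ v₀ : ℝ, v₀ = max 0 (s - 1) := ⟨_, rfl⟩
    have hv₀0 : 0 ≤ v₀ := hv₀def ▸ le_max_left _ _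
    have hv₀1 : s - 1 ≤ v₀ := hv₀def ▸ le_max_right _ _
    have hv₀s : v₀ < s := by rw [hv₀def]; exact max_lt hs (by linarith)
    have hv₀I : v₀ ∈ I := hIcoI hv₀0 hv₀s
    obtain ⟨C₀, hC₀def⟩ : ∃ C₀ : ℝ, C₀ = T v₀ - (-K * Real.log (s - v₀)) := ⟨_, rfl⟩
    have hcomp : MonotoneOn (fun x => T x - (-K * Real.log (s - x))) (Set.Ico v₀ s) := by
      apply monotoneOn_of_hasDerivWithinAt_nonneg (convex_Ico v₀ s)
        (f' := fun x => g x - K * (s - x)⁻¹)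
      · intro x hx
        exact (((hT_deriv x (hIcoI (hv₀0.trans hx.1) hx.2)).sub
          (hL_deriv x hx.2)).continuousAt).continuousWithinAt
      · intro x hx
        rw [interior_Ico] at hx
        exact ((hT_deriv x (hIcoI (hv₀0.trans hx.1.le) hx.2)).sub
          (hL_deriv x hx.2)).hasDerivWithinAt
      · intro x hx
        rw [interior_Ico] at hx
        have := hbound x (hv₀0.trans hx.1.le) (by linarith [hx.1]) (hIcoI (hv₀0.trans hx.1.le) hx.2)
        linarith
    obtain ⟨ε, hεdef⟩ : ∃ ε : ℝ, ε = min ((s - v₀)/2) (Real.exp ((C₀ - M - 1)/K)) := ⟨_, rfl⟩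
    have hεpos : 0 < ε := hεdef ▸ lt_min (by linarith) (Real.exp_pos _)
    have hε1 : ε ≤ (s - v₀)/2 := hεdef ▸ min_le_left _ _
    have hε2 : ε ≤ Real.exp ((C₀ - M - 1)/K) := hεdef ▸ min_le_right _ _
    refine ⟨s - ε, hIcoI (by linarith) (by linarith), ?_⟩
    have hvmem : s - ε ∈ Set.Ico v₀ s := ⟨by linarith, by linarith⟩
    have hmono := hcomp ⟨le_refl v₀, hv₀s⟩ hvmem (by linarith)
    simp only at hmono
    have hlog : Real.log (s - (s - ε)) ≤ (C₀ - M - 1)/K := by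
      rw [show s - (s - ε) = ε by ring]
      calc Real.log ε ≤ Real.log (Real.exp ((C₀ - M - 1)/K)) := Real.log_le_log hεpos hε2
        _ = (C₀ - M - 1)/K := Real.log_exp _
    have h6 : K * Real.log (s - (s - ε)) ≤ C₀ - M - 1 := by
      have := mul_le_mul_of_nonneg_left hlog hK.le
      rwa [mul_div_cancel₀ _ hK.ne'] at this
    have h7 : C₀ ≤ T (s - ε) - (-K * Real.log (s - (s - ε))) := hC₀def ▸ hmono
    linarith
  -- T is unbounded below
  have hminus : ∀ M : ℝ, ∃ v ∈ I, T v < M := by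
    intro M
    obtain ⟨w₀, hw₀def⟩ : ∃ w₀ : ℝ, w₀ = min 0 (1 - s) := ⟨_, rfl⟩
    have hw₀0 : w₀ ≤ 0 := hw₀def ▸ min_le_left _ _
    have hw₀1 : w₀ ≤ 1 - s := hw₀def ▸ min_le_right _ _
    have hw₀s : -s < w₀ := by rw [hw₀def]; exact lt_min (by linarith) (by linarith)
    have hw₀I : w₀ ∈ I := hIocI hw₀s hw₀0
    obtain ⟨C₁, hC₁def⟩ : ∃ C₁ : ℝ, C₁ = T w₀ - K * Real.log (s + w₀) := ⟨_, rfl⟩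
    have hcomp : MonotoneOn (fun x => T x - K * Real.log (s + x)) (Set.Ioc (-s) w₀) := by
      apply monotoneOn_of_hasDerivWithinAt_nonneg (convex_Ioc (-s) w₀)
        (f' := fun x => g x - K * (s + x)⁻¹)
      · intro x hx
        exact (((hT_deriv x (hIocI hx.1 (hx.2.trans hw₀0))).sub
          (hL2_deriv x hx.1)).continuousAt).continuousWithinAt
      · intro x hx
        rw [interior_Ioc] at hx
        exact ((hT_deriv x (hIocI hx.1 (hx.2.le.trans hw₀0))).sub
          (hL2_deriv x hx.1)).hasDerivWithinAt
      · intro x hx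
        rw [interior_Ioc] at hx
        have := hbound2 x (hx.2.le.trans hw₀0) (by linarith [hx.2]) (hIocI hx.1 (hx.2.le.trans hw₀0))
        linarith
    obtain ⟨ε, hεdef⟩ : ∃ ε : ℝ, ε = min ((s + w₀)/2) (Real.exp ((M - C₁ - 1)/K)) := ⟨_, rfl⟩
    have hεpos : 0 < ε := hεdef ▸ lt_min (by linarith) (Real.exp_pos _)
    have hε1 : ε ≤ (s + w₀)/2 := hεdef ▸ min_le_left _ _
    have hε2 : ε ≤ Real.exp ((M - C₁ - 1)/K) := hεdef ▸ min_le_right _ _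
    refine ⟨-s + ε, hIocI (by linarith) (by linarith), ?_⟩
    have hvmem : -s + ε ∈ Set.Ioc (-s) w₀ := ⟨by linarith, by linarith⟩
    have hmono := hcomp hvmem ⟨hw₀s, le_refl w₀⟩ (by linarith)
    simp only at hmono
    have hlog : Real.log (s + (-s + ε)) ≤ (M - C₁ - 1)/K := by
      rw [show s + (-s + ε) = ε by ring]
      calc Real.log ε ≤ Real.log (Real.exp ((M - C₁ - 1)/K)) := Real.log_le_log hεpos hε2
        _ = (M - C₁ - 1)/K := Real.log_exp _
    have h6 : K * Real.log (s + (-s + ε)) ≤ M - C₁ - 1 := by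
      have := mul_le_mul_of_nonneg_left hlog hK.le
      rwa [mul_div_cancel₀ _ hK.ne'] at this
    have h7 : T (-s + ε) - K * Real.log (s + (-s + ε)) ≤ C₁ := hC₁def ▸ hmono
    linarith
  -- surjectivity of T : I → ℝ
  have hsurj : ∀ t : ℝ, ∃ v ∈ I, T v = t := by
    intro t
    obtain ⟨p, hpI, hp⟩ := hminus t
    obtain ⟨q, hqI, hq⟩ := hplus t
    have hpq : p ≤ q := by
      by_contra h
      push_neg at h
      have := hTmono hqI hpI h
      linarith
    have hIccI : Set.Icc p q ⊆ I := by
      rw [hIdef] at hpI hqI ⊢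
      intro x hx
      exact ⟨lt_of_lt_of_le hpI.1 hx.1, lt_of_le_of_lt hx.2 hqI.2⟩
    have hTc : ContinuousOn T (Set.Icc p q) := fun x hx =>
      (hT_deriv x (hIccI hx)).continuousAt.continuousWithinAt
    have := intermediate_value_Icc hpq hTc
    obtain ⟨v, hv, hvT⟩ := this ⟨hp.le, hq.le⟩
    exact ⟨v, hIccI hv, hvT⟩
  choose w hwI hwT using hsurj
  have hwcont : ∀ t : ℝ, ContinuousAt w t := by
    intro t
    rw [Metric.continuousAt_iff]
    intro ε hε
    have hvI : w t ∈ Set.Ioo (-s) s := hIdef ▸ hwI t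
    obtain ⟨ε', hε'def⟩ : ∃ ε' : ℝ,
        ε' = min (ε/2) (min ((s - w t)/2) ((w t + s)/2)) := ⟨_, rfl⟩
    have hv1 := hvI.1
    have hv2 := hvI.2
    have hε'pos : 0 < ε' := by
      rw [hε'def]
      exact lt_min (by linarith) (lt_min (by linarith) (by linarith))
    have hε'ε : ε' ≤ ε/2 := by rw [hε'def]; exact min_le_left _ _
    have hε'1 : ε' ≤ (s - w t)/2 := by
      rw [hε'def]; exact (min_le_right _ _).trans (min_le_left _ _)
    have hε'2 : ε' ≤ (w t + s)/2 := by
      rw [hε'def]; exact (min_le_right _ _).trans (min_le_right _ _)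
    have hm1 : w t - ε' ∈ I := by
      rw [hIdef]; exact ⟨by linarith, by linarith⟩
    have hm2 : w t + ε' ∈ I := by
      rw [hIdef]; exact ⟨by linarith, by linarith⟩
    have h1 : T (w t - ε') < t := by
      have := hTmono hm1 (hwI t) (by linarith)
      rwa [hwT t] at this
    have h2 : t < T (w t + ε') := by
      have := hTmono (hwI t) hm2 (by linarith)
      rwa [hwT t] at this
    refine ⟨min (t - T (w t - ε')) (T (w t + ε') - t),
      lt_min (by linarith) (by linarith), ?_⟩
    intro y hy
    rw [Real.dist_eq] at hy ⊢
    have hyA : T (w t - ε') < y := by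
      have h3 := (abs_lt.mp hy).1
      have h4 := min_le_left (t - T (w t - ε')) (T (w t + ε') - t)
      linarith
    have hyB : y < T (w t + ε') := by
      have h3 := (abs_lt.mp hy).2
      have h4 := min_le_right (t - T (w t - ε')) (T (w t + ε') - t)
      linarith
    have l1 : w t - ε' < w y := by
      by_contra h
      push_neg at h
      have := hTmono.monotoneOn (hwI y) hm1 h
      rw [hwT y] at this
      linarith
    have l2 : w y < w t + ε' := by
      by_contra h
      push_neg at h
      have := hTmono.monotoneOn hm2 (hwI y) h
      rw [hwT y] at this
      linarith
    rw [abs_lt]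
    constructor <;> linarith
  have hw0 : w 0 = a₁ := by
    have hT0 : T a₁ = 0 := by rw [hTdef]; simp
    exact hTmono.injOn (hwI 0) ha₁I (by rw [hwT 0, hT0])
  have hw' : ∀ t, HasDerivAt w (g (w t))⁻¹ t := fun t =>
    HasDerivAt.of_local_left_inverse (hwcont t) (hT_deriv _ (hwI t)) (hgpos _ (hwI t)).ne'
      (Filter.Eventually.of_forall hwT)
  have hφpos : ∀ v ∈ I, 0 < φ v := by
    intro v hv
    rw [hφdef]
    exact mul_pos (Real.rpow_pos_of_pos hc _) (Real.rpow_pos_of_pos (hupos v hv) _)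
  have hφderiv : ∀ v ∈ I, HasDerivAt φ (c ^ β * (-v * -β * u v ^ (-β - 1))) v := by
    intro v hv
    rw [hφdef]
    exact ((hderivu v).rpow_const (Or.inl (hupos v hv).ne')).const_mul (c ^ β)
  have hβξc : β * ξ / c = 1 := by
    rw [hβdef, hcdef]
    field_simp
  have hkey2 : ∀ v ∈ I, (g v)⁻¹ = ξ / φ v ^ κ := by
    intro v hv
    have hUpos := hupos v hv
    rw [hgdef, hφdef]; simp only
    have h1 : (c ^ β * u v ^ (-β)) ^ κ = c ^ (β + 1) * u v ^ (-(β + 1)) := by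
      rw [Real.mul_rpow (Real.rpow_pos_of_pos hc _).le (Real.rpow_pos_of_pos hUpos _).le,
        ← Real.rpow_mul hc.le, ← Real.rpow_mul hUpos.le, hβκ,
        show -β * κ = -(β * κ) by ring, hβκ]
    rw [h1, inv_div]
  have hkey1 : ∀ v ∈ I, (c ^ β * (-v * -β * u v ^ (-β - 1))) * (g v)⁻¹ = v := by
    intro v hv
    have hUpos := hupos v hv
    have hcβ : (0:ℝ) < c ^ β := Real.rpow_pos_of_pos hc β
    have hUb : (0:ℝ) < u v ^ (-(β + 1)) := Real.rpow_pos_of_pos hUpos _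
    rw [hgdef]; simp only
    rw [show -β - 1 = -(β + 1) from by ring,
      show c ^ (β + 1) = c ^ β * c from by rw [Real.rpow_add hc, Real.rpow_one], inv_div]
    have hexp : c ^ β * (-v * -β * u v ^ (-(β + 1))) * (ξ / (c ^ β * c * u v ^ (-(β + 1))))
        = (β * ξ / c) * v := by
      field_simp
    rw [hexp, hβξc, one_mul]
  refine ⟨fun t => φ (w t), w, fun t => ξ / φ (w t) ^ κ, ?_, ?_, ?_, ?_, ?_, hw0⟩
  · intro t
    have h := (hφderiv (w t) (hwI t)).comp t (hw' t)
    rw [hkey1 (w t) (hwI t)] at h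
    exact h
  · intro t
    have h := hw' t
    rwa [hkey2 (w t) (hwI t)] at h
  · intro t
    exact hφpos (w t) (hwI t)
  · intro t
    rfl
  · show φ (w 0) = a₀
    rw [hw0, hφdef]; simp only
    have hu1 : u a₁ = c * a₀ ^ (1 - κ) := by
      rw [hudef]; simp only; rw [hEdef]; ring
    rw [hu1, Real.mul_rpow hc.le (Real.rpow_pos_of_pos ha₀ (1 - κ)).le,
      ← Real.rpow_mul ha₀.le]
    have e3 : (1 - κ) * (-β) = 1 := by rw [hβdef]; field_simp; ring
    rw [e3, Real.rpow_one, show c ^ β * (c ^ (-β) * a₀) = (c ^ β * c ^ (-β)) * a₀ from by ring,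
      ← Real.rpow_add hc, add_neg_cancel, Real.rpow_zero, one_mul]



/-- Emden equation with `ξ > 0`: for any `a₀ > 0` and `a₁ ∈ ℝ` there exists a
global positive `C²` solution of `a'' = ξ/a^κ`, `a(0) = a₀`, `a'(0) = a₁` on
`[0,∞)` with `a(t) → +∞`; moreover every positive `C²` solution of this
initial-value problem on `[0,∞)` tends to `+∞`. -/
theorem emden_positive_xi_global
    (κ ξ a₀ a₁ : ℝ) (hκ : 1 < κ) (hξ : 0 < ξ) (ha₀ : 0 < a₀) :
    (∃ a a' a'' : ℝ → ℝ,
      (∀ t ∈ Set.Ici (0 : ℝ), HasDerivAt a (a' t) t) ∧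
      (∀ t ∈ Set.Ici (0 : ℝ), HasDerivAt a' (a'' t) t) ∧
      ContinuousOn a'' (Set.Ici 0) ∧
      (∀ t ∈ Set.Ici (0 : ℝ), 0 < a t) ∧
      (∀ t ∈ Set.Ici (0 : ℝ), a'' t = ξ / a t ^ κ) ∧
      a 0 = a₀ ∧ a' 0 = a₁ ∧
      Filter.Tendsto a Filter.atTop Filter.atTop) ∧
    (∀ a a' a'' : ℝ → ℝ,
      (∀ t ∈ Set.Ici (0 : ℝ), HasDerivAt a (a' t) t) →
      (∀ t ∈ Set.Ici (0 : ℝ), HasDerivAt a' (a'' t) t) →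
      ContinuousOn a'' (Set.Ici 0) →
      (∀ t ∈ Set.Ici (0 : ℝ), 0 < a t) →
      (∀ t ∈ Set.Ici (0 : ℝ), a'' t = ξ / a t ^ κ) →
      a 0 = a₀ → a' 0 = a₁ →
      Filter.Tendsto a Filter.atTop Filter.atTop) := by
  constructor
  · obtain ⟨a, a', a'', h1, h2, h3, h4, h5, h6⟩ := emden_exists_aux κ ξ a₀ a₁ hκ hξ ha₀
    have hcont : ContinuousOn a'' (Set.Ici 0) := by
      have haeq : a'' = fun t => ξ / a t ^ κ := funext h4
      rw [haeq]
      intro t _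
      exact (continuousAt_const.div (((h1 t).continuousAt).rpow_const (Or.inl (h3 t).ne'))
        (Real.rpow_pos_of_pos (h3 t) κ).ne').continuousWithinAt
    exact ⟨a, a', a'', fun t _ => h1 t, fun t _ => h2 t, hcont, fun t _ => h3 t,
      fun t _ => h4 t, h5, h6,
      emden_blowup_aux κ ξ a₀ a₁ hκ hξ ha₀ a a' a'' (fun t _ => h1 t) (fun t _ => h2 t)
        (fun t _ => h3 t) (fun t _ => h4 t) h5 h6⟩
  · intro a a' a'' hd1 hd2 _ hpos heq h0 h1
    exact emden_blowup_aux κ ξ a₀ a₁ hκ hξ ha₀ a a' a'' hd1 hd2 hpos heq h0 h1
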